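/- For a linear map L on a finite-dimensional space with block decomposition as above, the following are equivalent: (i) Δ ∘ L^n ∘ Δ⊥ ∘ L^{n'} ∘ Δ = 0 for all n, n' ∈ ℕ; (ii) L_pc ∘ L_cc^j ∘ L_cp = 0 for all j ∈ ℕ. -/
import Mathlib

section aux
variable {R : Type*} [Ring R] (L e f : R)

open Finset

lemma ncgd_auxA (he : e * e = e) (hf : f * f = f) (hsum : e + f = 1) (m : ℕ) :
    e * L ^ (m + 1) * f =
      ∑ k ∈ range (m + 1), (e * L ^ (m - k) * e) * (e * L * f) * (f * L * f) ^ k := by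
  have he' : ∀ x : R, e * (e * x) = e * x := fun x => by rw [← mul_assoc, he]
  have hf' : ∀ x : R, f * (f * x) = f * x := fun x => by rw [← mul_assoc, hf]
  induction m with
  | zero => simp [mul_assoc, he, hf, he', hf']
  | succ m ih =>
    have h1 : e * L ^ (m + 2) * f =
        (e * L ^ (m + 1) * e) * (e * L * f) + (e * L ^ (m + 1) * f) * (f * L * f) := by
      have h2 : e * L ^ (m + 2) * f = e * L ^ (m + 1) * ((e + f) * (L * f)) := by
        rw [hsum, one_mul]
        simp only [pow_succ, mul_assoc]
      rw [h2, add_mul, mul_add]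
      simp only [mul_assoc, he', hf']
    rw [h1, ih, Finset.sum_mul]
    conv_rhs => rw [Finset.sum_range_succ']
    simp only [Nat.succ_sub_succ, Nat.sub_zero, pow_zero, pow_succ, mul_one, mul_assoc]
    rw [add_comm]

lemma ncgd_auxB (he : e * e = e) (hf : f * f = f) (hsum : e + f = 1) (m : ℕ) :
    f * L ^ (m + 1) * e =
      ∑ k ∈ range (m + 1), (f * L * f) ^ k * (f * L * e) * (e * L ^ (m - k) * e) := by
  have he' : ∀ x : R, e * (e * x) = e * x := fun x => by rw [← mul_assoc, he]
  have hf' : ∀ x : R, f * (f * x) = f * x := fun x => by rw [← mul_assoc, hf]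
  induction m with
  | zero => simp [mul_assoc, he, hf, he', hf']
  | succ m ih =>
    have h1 : f * L ^ (m + 2) * e =
        (f * L * f) * (f * L ^ (m + 1) * e) + (f * L * e) * (e * L ^ (m + 1) * e) := by
      have h2 : f * L ^ (m + 2) * e = f * L * ((e + f) * (L ^ (m + 1) * e)) := by
        rw [hsum, one_mul]
        simp only [pow_succ', mul_assoc]
      rw [h2, add_mul, mul_add]
      simp only [mul_assoc, he', hf']
      rw [add_comm]
    rw [h1, ih, Finset.mul_sum]
    conv_rhs => rw [Finset.sum_range_succ']
    simp only [Nat.succ_sub_succ, Nat.sub_zero, pow_zero, pow_succ', one_mul, mul_assoc]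

lemma ncgd_key (he : e * e = e) (hf : f * f = f) (hef : e * f = 0) (hfe : f * e = 0)
    (hsum : e + f = 1) :
    (∀ n n' : ℕ, e * L ^ n * f * L ^ n' * e = 0) ↔
    (∀ j : ℕ, (e * L * f) * (f * L * f) ^ j * (f * L * e) = 0) := by
  have he' : ∀ x : R, e * (e * x) = e * x := fun x => by rw [← mul_assoc, he]
  have hf' : ∀ x : R, f * (f * x) = f * x := fun x => by rw [← mul_assoc, hf]
  have hff : f * L * f * f = f * L * f := by rw [mul_assoc (f * L), hf]
  have hend : ∀ k : ℕ, (e * L * f) * (f * L * f) ^ k * f = (e * L * f) * (f * L * f) ^ k := by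
    intro k
    induction k with
    | zero => simp only [pow_zero, mul_one]; rw [mul_assoc (e * L), hf]
    | succ k ih =>
      rw [pow_succ, ← mul_assoc (e * L * f),
        mul_assoc (e * L * f * (f * L * f) ^ k) (f * L * f) f, hff]
  constructor
  · intro h j
    induction j using Nat.strong_induction_on with
    | _ j ih =>
      have h1 := h (j + 1) 1
      rw [ncgd_auxA L e f he hf hsum, pow_one, Finset.sum_mul, Finset.sum_mul] at h1
      have h2 : ∀ k ∈ Finset.range (j + 1),
          (e * L ^ (j - k) * e) * (e * L * f) * (f * L * f) ^ k * L * e =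
          (e * L ^ (j - k) * e) * ((e * L * f) * (f * L * f) ^ k * (f * L * e)) := by
        intro k _
        have h3 : (e * L ^ (j - k) * e) * (e * L * f) * (f * L * f) ^ k * L * e =
            ((e * L ^ (j - k) * e) * ((e * L * f) * (f * L * f) ^ k * f)) * (L * e) := by
          rw [hend k]; simp only [mul_assoc]
        rw [h3]; simp only [mul_assoc]
      rw [Finset.sum_congr rfl h2, Finset.sum_range_succ,
        Finset.sum_eq_zero (fun k hk => by
          rw [ih k (Finset.mem_range.mp hk), mul_zero])] at h1
      simp only [Nat.sub_self, pow_zero, mul_one, zero_add, mul_assoc, he', he] at h1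
      simpa only [mul_assoc] using h1
  · intro h n n'
    match n, n' with
    | 0, n' =>
      simp only [pow_zero, mul_one, hef, zero_mul]
    | n + 1, 0 =>
      simp only [pow_zero, mul_one]
      rw [mul_assoc, hfe, mul_zero]
    | n + 1, n' + 1 =>
      have h0 : e * L ^ (n + 1) * f * L ^ (n' + 1) * e =
          (e * L ^ (n + 1) * f) * (f * L ^ (n' + 1) * e) := by
        have h4 : e * L ^ (n + 1) * f = e * L ^ (n + 1) * f * f := by
          rw [mul_assoc (e * L ^ (n + 1)), hf]
        conv_lhs => rw [h4]
        simp only [mul_assoc]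
      rw [h0, ncgd_auxA L e f he hf hsum, ncgd_auxB L e f he hf hsum,
        Finset.sum_mul_sum]
      apply Finset.sum_eq_zero
      intro k _
      apply Finset.sum_eq_zero
      intro k' _
      have hx : (e * L ^ (n - k) * e) * (e * L * f) * (f * L * f) ^ k *
          ((f * L * f) ^ k' * (f * L * e) * (e * L ^ (n' - k') * e)) =
          (e * L ^ (n - k) * e) * (((e * L * f) * (f * L * f) ^ (k + k') * (f * L * e)) *
            (e * L ^ (n' - k') * e)) := by
        simp only [pow_add, mul_assoc]
      rw [hx, h (k + k'), zero_mul, mul_zero]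

end aux

/-- Equivalence: `Δ L^n Δ⊥ L^{n'} Δ = 0` for all `n, n'` iff
`L_pc L_cc^j L_cp = 0` for all `j ∈ ℕ`. -/
theorem ncgd_iff_powers (V : Type*) [AddCommGroup V] [Module ℂ V] [FiniteDimensional ℂ V]
    (L Δ : Module.End ℂ V) (hΔ : Δ * Δ = Δ) :
    (∀ n n' : ℕ, Δ * L ^ n * (1 - Δ) * L ^ n' * Δ = 0) ↔
    (∀ j : ℕ, (Δ * L * (1 - Δ)) * ((1 - Δ) * L * (1 - Δ)) ^ j * ((1 - Δ) * L * Δ) = 0) := by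
  exact ncgd_key L Δ (1 - Δ) hΔ
    (by rw [sub_mul, mul_sub, mul_sub, hΔ, one_mul, mul_one]; abel)
    (by rw [mul_sub, mul_one, hΔ, sub_self])
    (by rw [sub_mul, one_mul, hΔ, sub_self])
    (by abel)
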